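/- Fix an integer C ≥ 1, per-chunk demands w : {1,…,C} → ℝ with w(i) ≥ 0, a bandwidth function B : ℕ → ℝ with B(j) ≥ 0 and cumulative bandwidth R(t) = ∑_{j=1}^{t} B(j), and a strictly increasing deadline function d : {1,…,C} → ℕ with d(i) ≥ 1. Then there exists an allocation z : {1,…,C} × ℕ → ℝ with z(i,j) ≥ 0, z(i,j) = 0 whenever j > d(i), ∑_{i=1}^{C} z(i,j) ≤ B(j) for every j ≥ 1, and ∑_{j=1}^{d(i)} z(i,j) = w(i) for every i, if and only if ∑_{i'=1}^{i} w(i') ≤ R(d(i)) for every i ∈ {1,…,C}. (Generalized prefix feasibility characterization with heterogeneous per-chunk demands; this covers variable-bit-rate chunks and the layered residual-bandwidth scheduling of the enhancement layers used in the optimality proofs.) -/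

import Mathlib

private def Wc (w : ℕ → ℝ) (i : ℕ) : ℝ := ∑ i' ∈ Finset.Icc 1 i, w i'

private lemma Wc_zero (w : ℕ → ℝ) : Wc w 0 = 0 := by simp [Wc]

private lemma Wc_step (w : ℕ → ℝ) {j : ℕ} (hj : 1 ≤ j) : Wc w j = Wc w (j-1) + w j := by
  cases j with
  | zero => omega
  | succ k =>
    simpa [Wc] using Finset.sum_Icc_succ_top (Nat.succ_le_succ (Nat.zero_le k)) w

private lemma Wc_mono (w : ℕ → ℝ) {t t' : ℕ} (h : t ≤ t')
    (hw : ∀ j, 1 ≤ j → j ≤ t' → 0 ≤ w j) : Wc w t ≤ Wc w t' :=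
  Finset.sum_le_sum_of_subset_of_nonneg (Finset.Icc_subset_Icc_right h)
    fun j hj _ => hw j (Finset.mem_Icc.mp hj).1 (Finset.mem_Icc.mp hj).2

private lemma Wc_nonneg (w : ℕ → ℝ) {t : ℕ} (hw : ∀ j, 1 ≤ j → j ≤ t → 0 ≤ w j) :
    0 ≤ Wc w t := by
  have := Wc_mono w (Nat.zero_le t) hw
  rwa [Wc_zero] at this

private lemma telescope_Icc (F : ℕ → ℝ) (n : ℕ) :
    ∑ j ∈ Finset.Icc 1 n, (F j - F (j-1)) = F n - F 0 := by
  induction n with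
  | zero => simp
  | succ k ih =>
    rw [Finset.sum_Icc_succ_top (Nat.succ_le_succ (Nat.zero_le k)), ih]
    simp

private lemma min_sub_min_mono {a b r s : ℝ} (hab : a ≤ b) (hrs : r ≤ s) :
    min a s - min a r ≤ min b s - min b r := by
  rcases le_total a r with h1 | h1
  · rw [min_eq_left (h1.trans hrs), min_eq_left h1]
    have := min_le_min_left b hrs
    linarith
  · rw [min_eq_right h1, min_eq_right (h1.trans hab)]
    rcases le_total b s with h2 | h2
    · rw [min_eq_left (hab.trans h2), min_eq_left h2]; linarith
    · rw [min_eq_right h2]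
      have := min_le_right a s
      linarith


/-- Generalized prefix feasibility characterization with heterogeneous per-chunk
demands: chunks `1,…,C` with demands `w i ≥ 0` and strictly increasing deadlines
`d` can all be fully delivered (with per-slot budgets `B j`) iff for every
`i ∈ {1,…,C}` the total demand of the first `i` chunks is at most the cumulative
bandwidth `R(d(i)) = ∑_{j=1}^{d(i)} B j`. This covers variable-bit-rate chunks and
the layered residual-bandwidth scheduling of the enhancement layers. -/
theorem prefix_feasibility_general
    (C : ℕ) (hC : 1 ≤ C)
    (w : ℕ → ℝ) (hw : ∀ i, 1 ≤ i → i ≤ C → 0 ≤ w i)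
    (B : ℕ → ℝ) (hB : ∀ j, 1 ≤ j → 0 ≤ B j)
    (d : ℕ → ℕ)
    (hd1 : ∀ i, 1 ≤ i → i ≤ C → 1 ≤ d i)
    (hdmono : ∀ i i', 1 ≤ i → i < i' → i' ≤ C → d i < d i') :
    (∃ z : ℕ → ℕ → ℝ,
      (∀ i j, 0 ≤ z i j) ∧
      (∀ i j, d i < j → z i j = 0) ∧
      (∀ j, 1 ≤ j → ∑ i ∈ Finset.Icc 1 C, z i j ≤ B j) ∧
      (∀ i ∈ Finset.Icc 1 C, ∑ j ∈ Finset.Icc 1 (d i), z i j = w i)) ↔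
    (∀ i ∈ Finset.Icc 1 C,
      ∑ i' ∈ Finset.Icc 1 i, w i' ≤ ∑ j ∈ Finset.Icc 1 (d i), B j) := by
  classical
  constructor
  · rintro ⟨z, hz0, hzd, hzB, hzw⟩ i hi
    simp only [Finset.mem_Icc] at hi
    have hdle : ∀ i' ∈ Finset.Icc 1 i, d i' ≤ d i := by
      intro i' hi'
      simp only [Finset.mem_Icc] at hi'
      rcases lt_or_eq_of_le hi'.2 with h | h
      · exact (hdmono i' i hi'.1 h hi.2).le
      · exact h ▸ le_rfl
    calc ∑ i' ∈ Finset.Icc 1 i, w i'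
        = ∑ i' ∈ Finset.Icc 1 i, ∑ j ∈ Finset.Icc 1 (d i'), z i' j := by
          refine Finset.sum_congr rfl fun i' hi' => ?_
          simp only [Finset.mem_Icc] at hi'
          exact (hzw i' (Finset.mem_Icc.mpr ⟨hi'.1, hi'.2.trans hi.2⟩)).symm
      _ ≤ ∑ i' ∈ Finset.Icc 1 i, ∑ j ∈ Finset.Icc 1 (d i), z i' j := by
          refine Finset.sum_le_sum fun i' hi' => ?_
          exact Finset.sum_le_sum_of_subset_of_nonneg
            (Finset.Icc_subset_Icc_right (hdle i' hi')) fun j _ _ => hz0 i' j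
      _ = ∑ j ∈ Finset.Icc 1 (d i), ∑ i' ∈ Finset.Icc 1 i, z i' j := Finset.sum_comm
      _ ≤ ∑ j ∈ Finset.Icc 1 (d i), ∑ i' ∈ Finset.Icc 1 C, z i' j := by
          refine Finset.sum_le_sum fun j _ => ?_
          exact Finset.sum_le_sum_of_subset_of_nonneg
            (Finset.Icc_subset_Icc_right hi.2) fun i' _ _ => hz0 i' j
      _ ≤ ∑ j ∈ Finset.Icc 1 (d i), B j := by
          refine Finset.sum_le_sum fun j hj => ?_
          exact hzB j (Finset.mem_Icc.mp hj).1
  · intro hfeas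
    have hfeas' : ∀ i, 1 ≤ i → i ≤ C → Wc w i ≤ Wc B (d i) := by
      intro i h1 h2
      exact hfeas i (Finset.mem_Icc.mpr ⟨h1, h2⟩)
    have hWmono : ∀ i, 1 ≤ i → i ≤ C → Wc w (i-1) ≤ Wc w i := by
      intro i h1 h2
      rw [Wc_step w h1]
      have := hw i h1 h2
      linarith
    have hWnonneg : ∀ i, i ≤ C → 0 ≤ Wc w i := by
      intro i h
      exact Wc_nonneg w fun j hj1 hj2 => hw j hj1 (hj2.trans h)
    have hRmono : ∀ t t', t ≤ t' → Wc B t ≤ Wc B t' := by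
      intro t t' h
      exact Wc_mono B h fun j hj _ => hB j hj
    have hRnonneg : ∀ t, 0 ≤ Wc B t := fun t => Wc_nonneg B fun j hj _ => hB j hj
    refine ⟨fun i j => if h : 1 ≤ i ∧ i ≤ C ∧ 1 ≤ j then
        (min (Wc w i) (Wc B j) - min (Wc w i) (Wc B (j-1))) -
        (min (Wc w (i-1)) (Wc B j) - min (Wc w (i-1)) (Wc B (j-1))) else 0,
      ?_, ?_, ?_, ?_⟩
    · intro i j
      dsimp only
      split_ifs with h
      · have := min_sub_min_mono (hWmono i h.1 h.2.1) (hRmono (j-1) j (Nat.sub_le j 1))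
        linarith
      · exact le_rfl
    · intro i j hj
      dsimp only
      split_ifs with h
      · obtain ⟨h1, h2, h3⟩ := h
        have hWi : Wc w i ≤ Wc B (j-1) :=
          (hfeas' i h1 h2).trans (hRmono _ _ (Nat.le_sub_one_of_lt hj))
        have hWi' : Wc w (i-1) ≤ Wc B (j-1) := (hWmono i h1 h2).trans hWi
        have hRj : Wc B (j-1) ≤ Wc B j := hRmono _ _ (Nat.sub_le j 1)
        rw [min_eq_left hWi, min_eq_left (hWi.trans hRj),
          min_eq_left hWi', min_eq_left (hWi'.trans hRj)]
        ring
      · rfl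
    · intro j hj
      have hrw : ∀ i ∈ Finset.Icc 1 C,
          (if h : 1 ≤ i ∧ i ≤ C ∧ 1 ≤ j then
            (min (Wc w i) (Wc B j) - min (Wc w i) (Wc B (j-1))) -
            (min (Wc w (i-1)) (Wc B j) - min (Wc w (i-1)) (Wc B (j-1))) else 0) =
          (fun i => min (Wc w i) (Wc B j) - min (Wc w i) (Wc B (j-1))) i -
          (fun i => min (Wc w i) (Wc B j) - min (Wc w i) (Wc B (j-1))) (i-1) := by
        intro i hi
        simp only [Finset.mem_Icc] at hi
        rw [dif_pos ⟨hi.1, hi.2, hj⟩]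
      rw [Finset.sum_congr rfl hrw, telescope_Icc]
      have hF0 : min (Wc w 0) (Wc B j) - min (Wc w 0) (Wc B (j-1)) = 0 := by
        rw [Wc_zero, min_eq_left (hRnonneg j), min_eq_left (hRnonneg (j-1))]
        ring
      have hRstep : Wc B j = Wc B (j-1) + B j := Wc_step B hj
      rcases le_total (Wc w C) (Wc B (j-1)) with h | h
      · rw [hF0, min_eq_left h,
          min_eq_left (h.trans (hRmono (j-1) j (Nat.sub_le j 1)))]
        have := hB j hj
        linarith
      · rw [hF0, min_eq_right h]
        have := min_le_right (Wc w C) (Wc B j)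
        linarith
    · intro i hi
      simp only [Finset.mem_Icc] at hi
      have hrw : ∀ j ∈ Finset.Icc 1 (d i),
          (if h : 1 ≤ i ∧ i ≤ C ∧ 1 ≤ j then
            (min (Wc w i) (Wc B j) - min (Wc w i) (Wc B (j-1))) -
            (min (Wc w (i-1)) (Wc B j) - min (Wc w (i-1)) (Wc B (j-1))) else 0) =
          (fun j => min (Wc w i) (Wc B j) - min (Wc w (i-1)) (Wc B j)) j -
          (fun j => min (Wc w i) (Wc B j) - min (Wc w (i-1)) (Wc B j)) (j-1) := by
        intro j hj
        simp only [Finset.mem_Icc] at hj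
        rw [dif_pos ⟨hi.1, hi.2, hj.1⟩]
        ring
      rw [Finset.sum_congr rfl hrw, telescope_Icc]
      have hH0 : min (Wc w i) (Wc B 0) - min (Wc w (i-1)) (Wc B 0) = 0 := by
        rw [Wc_zero, min_eq_right (hWnonneg i hi.2),
          min_eq_right (hWnonneg (i-1) ((Nat.sub_le i 1).trans hi.2))]
        ring
      have h1 : Wc w i ≤ Wc B (d i) := hfeas' i hi.1 hi.2
      have h2 : Wc w (i-1) ≤ Wc B (d i) := (hWmono i hi.1 hi.2).trans h1
      rw [hH0, min_eq_left h1, min_eq_left h2]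
      have := Wc_step w hi.1
      linarith
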